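/- arXiv:1202.0964 — 2 statements merged into one kernel-verified Lean document; each statement's English description precedes it below -/
import Mathlib

section
/- Let 1 < k < n and let G be a simple graph of order n with q_{k+1}(G) = n − 2. Then 0 is an eigenvalue of the signless Laplacian of the complement of G with multiplicity at least k; consequently the complement of G has at least k bipartite components. -/
open Matrix SimpleGraph
open scoped Classical

/-- The `k`-th largest eigenvalue (1-indexed, counted with multiplicity) of a real
symmetric (Hermitian) matrix; junk value `0` if `M` is not Hermitian or `k` is out of range. -/
noncomputable def kthEig {V : Type*} [Fintype V] [DecidableEq V]
    (M : Matrix V V ℝ) (k : ℕ) : ℝ :=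
  if hM : M.IsHermitian then
    if h : k - 1 < Fintype.card V then
      letI f : Fin (Fintype.card V) → ℝ := hM.eigenvalues ∘ (Fintype.equivFin V).symm
      (f ∘ Tuple.sort f) (Fin.rev ⟨k - 1, h⟩)
    else 0
  else 0

/-- The signless Laplacian `Q(G) = D(G) + A(G)` of a simple graph `G`. -/
noncomputable def signlessLap {V : Type*} [Fintype V] [DecidableEq V]
    (G : SimpleGraph V) [DecidableRel G.Adj] : Matrix V V ℝ :=
  G.degMatrix ℝ + G.adjMatrix ℝ

/-- `qEig G k` is the `k`-th largest signless Laplacian eigenvalue `q_k(G)`. -/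
noncomputable def qEig {V : Type*} [Fintype V] [DecidableEq V]
    (G : SimpleGraph V) [DecidableRel G.Adj] (k : ℕ) : ℝ :=
  kthEig (signlessLap G) k

/-- `c` is a bipartite connected component of `H`: the vertex set of the component splits
into two disjoint classes `U`, `W` such that every edge of the component joins `U` and `W`. -/
def IsBipartiteComponent {V : Type*} (H : SimpleGraph V) (c : H.ConnectedComponent) : Prop :=
  ∃ U W : Set V, U ∪ W = c.supp ∧ Disjoint U W ∧
    ∀ ⦃u v : V⦄, u ∈ c.supp → H.Adj u v → (u ∈ U ∧ v ∈ W) ∨ (u ∈ W ∧ v ∈ U)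

/-- `c` is a balanced bipartite connected component of `H`: bipartite with vertex classes
of equal size. -/
def IsBalancedBipartiteComponent {V : Type*} (H : SimpleGraph V)
    (c : H.ConnectedComponent) : Prop :=
  ∃ U W : Set V, U ∪ W = c.supp ∧ Disjoint U W ∧ U.ncard = W.ncard ∧
    ∀ ⦃u v : V⦄, u ∈ c.supp → H.Adj u v → (u ∈ U ∧ v ∈ W) ∨ (u ∈ W ∧ v ∈ U)

/-- `G` is the complete multipartite graph whose parts are the fibers of `p`:
two vertices are adjacent iff they lie in different parts. -/
def IsCompleteMultipartiteWith {V ι : Type*} (G : SimpleGraph V) (p : V → ι) : Prop :=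
  ∀ u v : V, G.Adj u v ↔ p u ≠ p v

section Aux

open Finset

variable {V : Type*} [Fintype V] [DecidableEq V]

lemma signlessLap_isHermitian (H : SimpleGraph V) [DecidableRel H.Adj] :
    (signlessLap H).IsHermitian := by
  rw [Matrix.IsHermitian, conjTranspose_eq_transpose_of_trivial]
  exact (isSymm_degMatrix (R := ℝ) (G := H)).add (isSymm_adjMatrix H)

lemma signlessLap_quad (H : SimpleGraph V) [DecidableRel H.Adj] (x : V → ℝ) :
    x ⬝ᵥ (signlessLap H *ᵥ x) =
      (∑ i : V, ∑ j : V, if H.Adj i j then (x i + x j)^2 else 0) / 2 := by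
  simp_rw [signlessLap, add_mulVec, dotProduct_add, dotProduct_mulVec_degMatrix,
    dotProduct_mulVec_adjMatrix, ← sum_add_distrib, degree_eq_sum_if_adj, sum_mul, ite_mul, one_mul,
    zero_mul, ← sum_add_distrib, ite_add_ite, add_zero]
  rw [← add_self_div_two (∑ i : V, ∑ j : V, _)]
  conv_lhs => enter [1,2,2,i,2,j]; rw [if_congr (adj_comm H i j) rfl rfl]
  conv_lhs => enter [1,2]; rw [Finset.sum_comm]
  simp_rw [← sum_add_distrib, ite_add_ite]
  congr 2 with i
  congr 2 with j
  ring_nf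

lemma signlessLap_quad_nonneg (H : SimpleGraph V) [DecidableRel H.Adj] (x : V → ℝ) :
    0 ≤ x ⬝ᵥ (signlessLap H *ᵥ x) := by
  rw [signlessLap_quad]
  positivity

lemma signlessLap_quad_eq_zero_iff (H : SimpleGraph V) [DecidableRel H.Adj] (x : V → ℝ) :
    x ⬝ᵥ (signlessLap H *ᵥ x) = 0 ↔ ∀ i j : V, H.Adj i j → x i + x j = 0 := by
  rw [signlessLap_quad]
  simp (disch := intros; positivity) [sum_eq_zero_iff_of_nonneg, pow_eq_zero_iff]

lemma signlessLap_mulVec_eq_zero (H : SimpleGraph V) [DecidableRel H.Adj] (x : V → ℝ)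
    (hx : ∀ i j : V, H.Adj i j → x i + x j = 0) : signlessLap H *ᵥ x = 0 := by
  ext i
  rw [signlessLap, add_mulVec, Pi.add_apply, degMatrix_mulVec_apply, adjMatrix_mulVec_apply]
  have : (H.degree i : ℝ) * x i = ∑ j ∈ H.neighborFinset i, x i := by
    rw [Finset.sum_const, card_neighborFinset_eq_degree, nsmul_eq_mul]
  rw [this, ← Finset.sum_add_distrib]
  simp only [Pi.zero_apply]
  exact Finset.sum_eq_zero fun j hj => hx i j (by rwa [← mem_neighborFinset])

lemma signlessLap_compl_add (G : SimpleGraph V) [DecidableRel G.Adj] :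
    signlessLap Gᶜ = ((Fintype.card V : ℝ) - 2) • (1 : Matrix V V ℝ) +
      (Matrix.of fun _ _ => (1:ℝ)) - signlessLap G := by
  ext u v
  simp only [signlessLap, Matrix.add_apply, Matrix.sub_apply, Matrix.smul_apply, Matrix.of_apply,
    Matrix.one_apply, degMatrix, Matrix.diagonal_apply, adjMatrix_apply, smul_eq_mul]
  by_cases huv : u = v
  · subst huv
    have hdeg : Gᶜ.degree u = Fintype.card V - 1 - G.degree u := degree_compl G u
    have hlt : G.degree u < Fintype.card V := G.degree_lt_card_verts u
    have h1 : 1 ≤ Fintype.card V := Fintype.card_pos_iff.mpr ⟨u⟩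
    simp only [if_pos rfl, compl_adj, G.irrefl, ne_eq, not_true_eq_false, false_and, if_false,
      and_false]
    rw [hdeg]
    rw [Nat.cast_sub (by omega : G.degree u ≤ Fintype.card V - 1),
      Nat.cast_sub (by omega : 1 ≤ Fintype.card V), Nat.cast_one]
    simp only [if_true]
    ring
  · simp only [if_neg huv, compl_adj, ne_eq, huv, not_false_eq_true, true_and]
    by_cases hadj : G.Adj u v <;> simp [hadj]

lemma dot_eq_repr {M : Matrix V V ℝ} (hM : M.IsHermitian) (x : EuclideanSpace ℝ V) (i : V) :
    x ⬝ᵥ ⇑(hM.eigenvectorBasis i) = hM.eigenvectorBasis.repr x i := by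
  rw [OrthonormalBasis.repr_apply_apply, real_inner_comm]
  simp [PiLp.inner_apply, RCLike.inner_apply, dotProduct]
  exact Finset.sum_congr rfl fun _ _ => mul_comm _ _

lemma quad_ge_of_mem_span {M : Matrix V V ℝ} (hM : M.IsHermitian) (r : ℝ) (s : Finset V)
    (hs : ∀ i ∈ s, r ≤ hM.eigenvalues i) (x : EuclideanSpace ℝ V)
    (hx : x ∈ Submodule.span ℝ (⇑hM.eigenvectorBasis '' ↑s)) :
    r * (x ⬝ᵥ x) ≤ x ⬝ᵥ (M *ᵥ x) := by
  set b := hM.eigenvectorBasis with hb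
  set c : V → ℝ := fun i => b.repr x i with hc
  have hc0 : ∀ i ∉ s, c i = 0 := by
    intro i hi
    induction hx using Submodule.span_induction with
    | mem y hy =>
        obtain ⟨j, hj, rfl⟩ := hy
        have hij : i ≠ j := fun h => hi (h ▸ hj)
        simp [hc, OrthonormalBasis.repr_self, EuclideanSpace.single_apply, hij]
    | zero => simp [hc]
    | add y z _ _ hy hz => simp [hc, map_add, hy, hz]
    | smul a y _ hy => simp [hc, _root_.map_smul, hy]
  have hxr : x = ∑ i : V, c i • ⇑(b i) := by
    have := congrArg WithLp.ofLp (b.sum_repr x).symm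
    simpa [hc] using this
  have dsum : ∀ y : V → V → ℝ, x ⬝ᵥ (∑ i, y i) = ∑ i, x ⬝ᵥ y i := by
    intro y
    simp only [dotProduct, Finset.sum_apply, Finset.mul_sum]
    exact Finset.sum_comm
  have hdot : ∀ i, x ⬝ᵥ ⇑(b i) = c i := fun i => dot_eq_repr hM x i
  have hMx : M *ᵥ x = ∑ i : V, (c i * hM.eigenvalues i) • ⇑(b i) := by
    conv_lhs => rw [hxr]
    rw [← M.mulVecLin_apply, map_sum]
    refine Finset.sum_congr rfl fun i _ => ?_
    rw [LinearMap.map_smul, M.mulVecLin_apply, hM.mulVec_eigenvectorBasis i, smul_smul]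
  have hform : x ⬝ᵥ (M *ᵥ x) = ∑ i : V, hM.eigenvalues i * c i ^ 2 := by
    rw [hMx, dsum]
    refine Finset.sum_congr rfl fun i _ => ?_
    rw [dotProduct_smul, hdot i, smul_eq_mul]
    ring
  have hnormsq : x ⬝ᵥ x = ∑ i : V, c i ^ 2 := by
    nth_rewrite 2 [hxr]
    rw [dsum]
    refine Finset.sum_congr rfl fun i _ => ?_
    rw [dotProduct_smul, hdot i, smul_eq_mul]
    ring
  rw [hform, hnormsq, Finset.mul_sum]
  rw [← Finset.sum_subset (Finset.subset_univ s)
    (fun i _ hi => by rw [hc0 i hi]; ring),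
    ← Finset.sum_subset (Finset.subset_univ s)
    (fun i _ hi => by rw [hc0 i hi]; ring)]
  exact Finset.sum_le_sum fun i hi =>
    mul_le_mul_of_nonneg_right (hs i hi) (sq_nonneg _)

lemma kthEig_exists_finset {M : Matrix V V ℝ} (hM : M.IsHermitian) {k : ℕ} (hk1 : 1 ≤ k)
    (hk : k - 1 < Fintype.card V) :
    ∃ s : Finset V, s.card = k ∧ ∀ i ∈ s, kthEig M k ≤ hM.eigenvalues i := by
  set e := Fintype.equivFin V with he
  set f : Fin (Fintype.card V) → ℝ := hM.eigenvalues ∘ e.symm with hf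
  set a : Fin (Fintype.card V) := Fin.rev ⟨k-1, hk⟩ with ha
  have hval : kthEig M k = f (Tuple.sort f a) := by
    rw [kthEig, dif_pos hM, dif_pos hk]
    rfl
  refine ⟨(Finset.Ici a).image (fun j => e.symm (Tuple.sort f j)), ?_, ?_⟩
  · have hinj : Function.Injective (fun j => e.symm ((Tuple.sort f) j)) :=
      e.symm.injective.comp (Tuple.sort f).injective
    rw [Finset.card_image_of_injective _ hinj, Fin.card_Ici]
    have : (a : ℕ) = Fintype.card V - (k - 1 + 1) := by rw [ha]; simp [Fin.val_rev]
    omega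
  · intro i hi
    simp only [Finset.mem_image, Finset.mem_Ici] at hi
    obtain ⟨j, hj, rfl⟩ := hi
    have := Tuple.monotone_sort f hj
    rw [hval]
    simpa [hf] using this

lemma abs_eq_of_reachable {V : Type*} (H : SimpleGraph V) (x : V → ℝ)
    (halt : ∀ u v : V, H.Adj u v → x u + x v = 0)
    {u v : V} (h : H.Reachable u v) : |x u| = |x v| := by
  obtain ⟨w⟩ := h
  induction w with
  | nil => rfl
  | cons h p ih =>
      rename_i a b c
      have : x b = - x a := by linarith [halt a b h]
      rw [← ih]
      rw [this, abs_neg]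

lemma bipartiteComponent_of_ne_zero {V : Type*} (H : SimpleGraph V) (x : V → ℝ)
    (halt : ∀ u v : V, H.Adj u v → x u + x v = 0) {u : V} (hu : x u ≠ 0) :
    IsBipartiteComponent H (H.connectedComponentMk u) := by
  set c := H.connectedComponentMk u with hc
  have hsupp : ∀ w, w ∈ c.supp → x w ≠ 0 := by
    intro w hw
    rw [ConnectedComponent.mem_supp_iff] at hw
    have hr : H.Reachable w u := ConnectedComponent.exact hw
    rw [← abs_ne_zero] at hu ⊢
    rwa [abs_eq_of_reachable H x halt hr]
  refine ⟨{w | w ∈ c.supp ∧ 0 < x w}, {w | w ∈ c.supp ∧ x w < 0}, ?_, ?_, ?_⟩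
  · ext w
    simp only [Set.mem_union, Set.mem_setOf_eq]
    constructor
    · rintro (⟨h1, _⟩ | ⟨h1, _⟩) <;> exact h1
    · intro hw
      rcases lt_or_gt_of_ne (hsupp w hw) with h | h
      · exact Or.inr ⟨hw, h⟩
      · exact Or.inl ⟨hw, h⟩
  · rw [Set.disjoint_left]
    rintro w ⟨_, h1⟩ ⟨_, h2⟩
    linarith
  · intro a b ha hadj
    have hb : b ∈ c.supp := by
      rw [ConnectedComponent.mem_supp_iff] at ha ⊢
      rw [← ha]
      exact (ConnectedComponent.connectedComponentMk_eq_of_adj hadj).symm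
    have hxb : x b = - x a := by linarith [halt a b hadj]
    have hxa : x a ≠ 0 := hsupp a ha
    rcases lt_or_gt_of_ne hxa with h | h
    · exact Or.inr ⟨⟨ha, h⟩, ⟨hb, by rw [hxb]; linarith⟩⟩
    · exact Or.inl ⟨⟨ha, h⟩, ⟨hb, by rw [hxb]; linarith⟩⟩

lemma finrank_ker_le_card_bipartite (H : SimpleGraph V) [DecidableRel H.Adj] :
    Module.finrank ℝ (LinearMap.ker (Matrix.toLin' (signlessLap H))) ≤
      {c : H.ConnectedComponent | IsBipartiteComponent H c}.ncard := by
  set C := {c : H.ConnectedComponent | IsBipartiteComponent H c} with hC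
  haveI : Finite H.ConnectedComponent :=
    Finite.of_surjective H.connectedComponentMk (fun c => Quot.exists_rep c)
  haveI : Fintype ↥C := Fintype.ofFinite _
  set K := LinearMap.ker (Matrix.toLin' (signlessLap H)) with hK
  set Φ : K →ₗ[ℝ] (↥C → ℝ) :=
    LinearMap.pi (fun c => (LinearMap.proj (Quot.out c.1)).comp K.subtype) with hΦ
  have hinj : Function.Injective Φ := by
    rw [← LinearMap.ker_eq_bot, LinearMap.ker_eq_bot']
    intro x hx
    have hker : signlessLap H *ᵥ (x : V → ℝ) = 0 := by
      have h2 := x.2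
      simp only [hK, LinearMap.mem_ker, Matrix.toLin'_apply] at h2
      exact h2
    have halt : ∀ u v : V, H.Adj u v → (x : V → ℝ) u + (x : V → ℝ) v = 0 := by
      rw [← signlessLap_quad_eq_zero_iff H]
      rw [hker, dotProduct_zero]
    apply Subtype.ext
    funext u
    by_contra hu
    have hbip : IsBipartiteComponent H (H.connectedComponentMk u) :=
      bipartiteComponent_of_ne_zero H _ halt hu
    have hzero : (x : V → ℝ) (Quot.out (H.connectedComponentMk u)) = 0 := by
      have := congrFun hx (⟨H.connectedComponentMk u, hbip⟩ : ↥C)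
      simpa [hΦ] using this
    have hreach : H.Reachable u (Quot.out (H.connectedComponentMk u)) :=
      ConnectedComponent.exact (Quot.out_eq (H.connectedComponentMk u)).symm
    have habs := abs_eq_of_reachable H _ halt hreach
    rw [hzero, abs_zero, abs_eq_zero] at habs
    exact hu habs
  calc Module.finrank ℝ K ≤ Module.finrank ℝ (↥C → ℝ) :=
        LinearMap.finrank_le_finrank_of_injective hinj
    _ = Fintype.card ↥C := Module.finrank_pi ℝ
    _ = Nat.card ↥C := (Nat.card_eq_fintype_card).symm
    _ = C.ncard := Nat.card_coe_set_eq C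

end Aux

/-- Let `1 < k < n` and let `G` be a graph of order `n` with `q_{k+1}(G) = n - 2`. Then
`0` is an eigenvalue of `Q(Ḡ)` with multiplicity at least `k`; consequently the complement
of `G` has at least `k` bipartite components. -/
theorem zero_multiplicity_of_qk_succ (n k : ℕ) (hk1 : 1 < k) (hkn : k < n)
    (G : SimpleGraph (Fin n)) [DecidableRel G.Adj]
    (h : qEig G (k + 1) = (n : ℝ) - 2) :
    Module.End.HasEigenvalue (Matrix.toLin' (signlessLap Gᶜ)) 0 ∧
    k ≤ Module.finrank ℝ (Module.End.eigenspace (Matrix.toLin' (signlessLap Gᶜ)) 0) ∧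
    k ≤ {c : Gᶜ.ConnectedComponent | IsBipartiteComponent Gᶜ c}.ncard := by
  have hQ : (signlessLap G).IsHermitian := signlessLap_isHermitian G
  have hcard : (k + 1) - 1 < Fintype.card (Fin n) := by
    simp only [Fintype.card_fin]
    omega
  obtain ⟨s, hs_card, hs⟩ := kthEig_exists_finset hQ (by omega) hcard
  have h' : kthEig (signlessLap G) (k+1) = (n : ℝ) - 2 := h
  have hs' : ∀ i ∈ s, (n : ℝ) - 2 ≤ hQ.eigenvalues i := fun i hi => h' ▸ hs i hi
  -- the spectral subspace
  set b := hQ.eigenvectorBasis with hb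
  set S : Submodule ℝ (EuclideanSpace ℝ (Fin n)) := Submodule.span ℝ (⇑b '' ↑s) with hS
  have hSrank : Module.finrank ℝ S = k + 1 := by
    have himg : ⇑b '' ↑s = Set.range (⇑b ∘ (Subtype.val : ↥(↑s : Set (Fin n)) → Fin n)) := by
      rw [Set.range_comp, Subtype.range_val]
    have hli : LinearIndependent ℝ (⇑b ∘ (Subtype.val : ↥(↑s : Set (Fin n)) → Fin n)) :=
      b.orthonormal.linearIndependent.comp _ Subtype.val_injective
    rw [hS, himg, finrank_span_eq_card hli]
    simp [hs_card]
  -- the sum functional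
  set L : EuclideanSpace ℝ (Fin n) →ₗ[ℝ] ℝ :=
    { toFun := fun x => ∑ i, x i
      map_add' := fun x y => by
        simp [PiLp.add_apply, Finset.sum_add_distrib]
      map_smul' := fun a x => by
        simp [PiLp.smul_apply, Finset.mul_sum, smul_eq_mul] } with hL
  have hrankE : Module.finrank ℝ (EuclideanSpace ℝ (Fin n)) = n := by
    simp [finrank_euclideanSpace]
  have hkerL : n - 1 ≤ Module.finrank ℝ (LinearMap.ker L) := by
    have h1 := LinearMap.finrank_range_add_finrank_ker L
    have h2 : Module.finrank ℝ (LinearMap.range L) ≤ 1 := by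
      have := Submodule.finrank_le (LinearMap.range L)
      simpa using this
    omega
  have hinf : k ≤ Module.finrank ℝ ↥(S ⊓ LinearMap.ker L) := by
    have hsup := Submodule.finrank_sup_add_finrank_inf_eq S (LinearMap.ker L)
    have h1 : Module.finrank ℝ ↥(S ⊔ LinearMap.ker L) ≤ n := by
      exact le_trans (Submodule.finrank_le _) (le_of_eq hrankE)
    omega
  -- elements of S ⊓ ker L are in the kernel of the complement signless Laplacian
  have hzero : ∀ x : EuclideanSpace ℝ (Fin n), x ∈ S ⊓ LinearMap.ker L →
      signlessLap Gᶜ *ᵥ x = 0 := by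
    intro x hx
    obtain ⟨hx1, hx2⟩ := hx
    have hsum : ∑ i, x i = 0 := hx2
    have hq : ((n : ℝ) - 2) * (x ⬝ᵥ x) ≤ x ⬝ᵥ (signlessLap G *ᵥ x) :=
      quad_ge_of_mem_span hQ _ s hs' x hx1
    have hJ : ((Matrix.of fun _ _ => (1:ℝ)) : Matrix (Fin n) (Fin n) ℝ) *ᵥ x
        = fun _ : Fin n => ∑ i, x i := by
      ext j
      simp [Matrix.mulVec, dotProduct]
    have hident : x ⬝ᵥ (signlessLap Gᶜ *ᵥ x) =
        ((n : ℝ) - 2) * (x ⬝ᵥ x) + (∑ i, x i)^2 - x ⬝ᵥ (signlessLap G *ᵥ x) := by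
      rw [signlessLap_compl_add G]
      rw [sub_mulVec, add_mulVec, Matrix.smul_mulVec, one_mulVec, hJ,
        dotProduct_sub, dotProduct_add, dotProduct_smul]
      have : x ⬝ᵥ (fun _ : Fin n => ∑ i, x i) = (∑ i, x i)^2 := by
        simp only [dotProduct, ← Finset.sum_mul]
        ring
      rw [this]
      simp [Fintype.card_fin, smul_eq_mul]
    have hle : x ⬝ᵥ (signlessLap Gᶜ *ᵥ x) ≤ 0 := by
      rw [hident, hsum]
      simp only [ne_eq, OfNat.ofNat_ne_zero, not_false_eq_true, zero_pow, add_zero]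
      linarith
    have hge : 0 ≤ x ⬝ᵥ (signlessLap Gᶜ *ᵥ x) := signlessLap_quad_nonneg Gᶜ x
    have heq : x ⬝ᵥ (signlessLap Gᶜ *ᵥ x) = 0 := le_antisymm hle hge
    exact signlessLap_mulVec_eq_zero Gᶜ x ((signlessLap_quad_eq_zero_iff Gᶜ x).mp heq)
  -- transfer to the kernel of toLin'
  set e : EuclideanSpace ℝ (Fin n) ≃ₗ[ℝ] (Fin n → ℝ) := WithLp.linearEquiv 2 ℝ (Fin n → ℝ) with he
  have hle_sub : S ⊓ LinearMap.ker L ≤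
      Submodule.comap (e : EuclideanSpace ℝ (Fin n) →ₗ[ℝ] (Fin n → ℝ))
        (LinearMap.ker (Matrix.toLin' (signlessLap Gᶜ))) := by
    intro x hx
    simp only [Submodule.mem_comap, LinearMap.mem_ker, Matrix.toLin'_apply]
    exact hzero x hx
  have hker_rank : k ≤ Module.finrank ℝ (LinearMap.ker (Matrix.toLin' (signlessLap Gᶜ))) := by
    calc k ≤ Module.finrank ℝ ↥(S ⊓ LinearMap.ker L) := hinf
      _ ≤ Module.finrank ℝ ↥(Submodule.comap (e : EuclideanSpace ℝ (Fin n) →ₗ[ℝ] (Fin n → ℝ))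
            (LinearMap.ker (Matrix.toLin' (signlessLap Gᶜ)))) := Submodule.finrank_mono hle_sub
      _ = Module.finrank ℝ (LinearMap.ker (Matrix.toLin' (signlessLap Gᶜ))) := by
          rw [Submodule.comap_equiv_eq_map_symm]
          exact LinearEquiv.finrank_map_eq e.symm _
  have heig : Module.End.eigenspace (Matrix.toLin' (signlessLap Gᶜ)) 0 =
      LinearMap.ker (Matrix.toLin' (signlessLap Gᶜ)) := Module.End.eigenspace_zero _
  refine ⟨?_, ?_, ?_⟩
  · rw [Module.End.hasEigenvalue_iff, heig]
    intro hbot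
    rw [hbot] at hker_rank
    simp [finrank_bot] at hker_rank
    omega
  · rw [heig]
    exact hker_rank
  · exact le_trans hker_rank (finrank_ker_le_card_bipartite Gᶜ)
end

section
/- If G is a simple graph of order n and 1 < k ≤ n, then q_k(G) ≤ n − 2. -/
open Matrix SimpleGraph
open scoped Classical

theorem signlessLap_isHermitian_s14 {V : Type*} [Fintype V] [DecidableEq V] (G : SimpleGraph V) [DecidableRel G.Adj] :
    (signlessLap G).IsHermitian := by
  unfold signlessLap
  rw [Matrix.IsHermitian, Matrix.conjTranspose_eq_transpose_of_trivial]
  exact ((G.isSymm_degMatrix (R := ℝ)).add (G.isSymm_adjMatrix (α := ℝ)))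

theorem signlessLap_form {V : Type*} [Fintype V] [DecidableEq V] (G : SimpleGraph V) [DecidableRel G.Adj] (x : V → ℝ) :
    2 * (x ⬝ᵥ (signlessLap G *ᵥ x)) =
      ∑ u : V, ∑ v : V, if G.Adj u v then (x u + x v)^2 else 0 := by
  unfold signlessLap
  rw [add_mulVec, dotProduct_add, dotProduct_mulVec_degMatrix, dotProduct_mulVec_adjMatrix]
  simp_rw [degree_eq_sum_if_adj]
  simp_rw [Finset.sum_mul, ite_mul, one_mul, zero_mul]
  have hswap : ∑ u : V, ∑ v : V, (if G.Adj u v then x u ^ 2 else 0)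
      = ∑ u : V, ∑ v : V, (if G.Adj u v then x v ^ 2 else 0) := by
    rw [Finset.sum_comm]
    simp_rw [adj_comm]
  ring_nf
  rw [mul_comm]
  rw [two_mul, add_assoc]
  nth_rewrite 2 [hswap]
  simp_rw [Finset.sum_mul, ite_mul, zero_mul, ← Finset.sum_add_distrib]
  refine Finset.sum_congr rfl fun u _ => Finset.sum_congr rfl fun v _ => ?_
  split <;> ring

theorem signlessLap_psd {V : Type*} [Fintype V] [DecidableEq V] (G : SimpleGraph V) [DecidableRel G.Adj] (x : V → ℝ) :
    0 ≤ x ⬝ᵥ (signlessLap G *ᵥ x) := by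
  have key := signlessLap_form G x
  have h0 : (0:ℝ) ≤ ∑ u : V, ∑ v : V, if G.Adj u v then (x u + x v)^2 else 0 :=
    Finset.sum_nonneg fun u _ => Finset.sum_nonneg fun v _ => by positivity
  linarith

theorem signlessLap_add_compl {n : ℕ} (G : SimpleGraph (Fin n)) [DecidableRel G.Adj] :
    signlessLap G = ((n:ℝ)-2) • (1 : Matrix (Fin n) (Fin n) ℝ)
      + (Matrix.of fun _ _ => (1:ℝ)) - signlessLap Gᶜ := by
  rcases Nat.eq_zero_or_pos n with hn | hn
  · subst hn; ext i j; exact i.elim0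
  ext i j
  by_cases hij : i = j
  · subst hij
    have hdeg : Gᶜ.degree i = n - 1 - G.degree i := by
      simpa using G.degree_compl (v := i)
    have hle : G.degree i ≤ n - 1 := by
      have := G.degree_lt_card_verts i
      simp only [Fintype.card_fin] at this
      omega
    simp only [signlessLap, degMatrix, Matrix.add_apply, Matrix.sub_apply,
      Matrix.diagonal_apply_eq, SimpleGraph.adjMatrix_apply, Matrix.smul_apply,
      Matrix.one_apply_eq, Matrix.of_apply, if_neg (G.loopless.irrefl i), if_neg (Gᶜ.loopless.irrefl i)]
    rw [hdeg]
    push_cast [hle, hn, smul_eq_mul]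
    ring
  · have hc : Gᶜ.Adj i j ↔ ¬ G.Adj i j := by
      rw [SimpleGraph.compl_adj]
      tauto
    simp only [signlessLap, degMatrix, Matrix.add_apply, Matrix.sub_apply,
      Matrix.diagonal_apply_ne _ hij, SimpleGraph.adjMatrix_apply, Matrix.smul_apply,
      Matrix.one_apply_ne hij, Matrix.of_apply, smul_zero, zero_add]
    by_cases hA : G.Adj i j <;> simp [hA, hc]

theorem quadform_le {n : ℕ} (G : SimpleGraph (Fin n)) [DecidableRel G.Adj]
    (x : Fin n → ℝ) (hx : ∑ v, x v = 0) :
    x ⬝ᵥ (signlessLap G *ᵥ x) ≤ ((n:ℝ) - 2) * (x ⬝ᵥ x) := by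
  have hpsd := signlessLap_psd Gᶜ x
  have hJ : x ⬝ᵥ ((Matrix.of fun _ _ => (1:ℝ)) *ᵥ x) = 0 := by
    simp only [Matrix.mulVec, dotProduct, Matrix.of_apply, one_mul]
    rw [← Finset.sum_mul, hx]
    simp
  rw [signlessLap_add_compl G, sub_mulVec, add_mulVec, dotProduct_sub, dotProduct_add,
    smul_mulVec, one_mulVec, dotProduct_smul, hJ]
  simp only [smul_eq_mul, add_zero]
  linarith

theorem not_two_large_eigs {n : ℕ} (G : SimpleGraph (Fin n)) [DecidableRel G.Adj]
    (i j : Fin n) (hij : i ≠ j)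
    (hi : ((n:ℝ) - 2) < (signlessLap_isHermitian_s14 G).eigenvalues i)
    (hj : ((n:ℝ) - 2) < (signlessLap_isHermitian_s14 G).eigenvalues j) : False := by
  set hM := signlessLap_isHermitian_s14 G with hMdef
  set u : Fin n → ℝ := ⇑(hM.eigenvectorBasis i) with hu
  set v : Fin n → ℝ := ⇑(hM.eigenvectorBasis j) with hv
  have hb := hM.eigenvectorBasis.orthonormal
  rw [orthonormal_iff_ite] at hb
  have hdot : ∀ p q : Fin n, (⇑(hM.eigenvectorBasis p)) ⬝ᵥ (⇑(hM.eigenvectorBasis q))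
      = if p = q then 1 else 0 := by
    intro p q
    have := hb p q
    simpa [PiLp.inner_apply, RCLike.inner_apply, dotProduct, mul_comm] using this
  have huu : u ⬝ᵥ u = 1 := by rw [hu, hdot, if_pos rfl]
  have hvv : v ⬝ᵥ v = 1 := by rw [hv, hdot, if_pos rfl]
  have huv : u ⬝ᵥ v = 0 := by rw [hu, hv, hdot, if_neg hij]
  have hvu : v ⬝ᵥ u = 0 := by rw [dotProduct_comm]; exact huv
  set su := ∑ t, u t with hsu
  set sv := ∑ t, v t with hsv
  obtain ⟨a, b, hab, hzero⟩ : ∃ a b : ℝ, ¬(a = 0 ∧ b = 0) ∧ a * su + b * sv = 0 := by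
    by_cases h : su = 0
    · exact ⟨1, 0, by simp, by simp [h]⟩
    · exact ⟨-sv, su, fun hc => h hc.2, by ring⟩
  set w : Fin n → ℝ := a • u + b • v with hw
  have hwsum : ∑ t, w t = 0 := by
    simp only [hw, Pi.add_apply, Pi.smul_apply, smul_eq_mul, Finset.sum_add_distrib,
      ← Finset.mul_sum]
    rw [← hsu, ← hsv]; exact hzero
  have hQu : signlessLap G *ᵥ u = hM.eigenvalues i • u := hM.mulVec_eigenvectorBasis i
  have hQv : signlessLap G *ᵥ v = hM.eigenvalues j • v := hM.mulVec_eigenvectorBasis j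
  have hQw : w ⬝ᵥ (signlessLap G *ᵥ w)
      = a^2 * hM.eigenvalues i + b^2 * hM.eigenvalues j := by
    rw [hw, Matrix.mulVec_add, Matrix.mulVec_smul, Matrix.mulVec_smul, hQu, hQv]
    rw [add_dotProduct, smul_dotProduct, smul_dotProduct]
    simp only [dotProduct_add, dotProduct_smul, smul_eq_mul]
    rw [huu, hvv, huv, hvu]
    ring
  have hww : w ⬝ᵥ w = a^2 + b^2 := by
    rw [hw, add_dotProduct, smul_dotProduct, smul_dotProduct]
    simp only [dotProduct_add, dotProduct_smul, smul_eq_mul]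
    rw [huu, hvv, huv, hvu]
    ring
  have hle := quadform_le G w hwsum
  rw [hQw, hww] at hle
  rcases not_and_or.mp hab with h | h
  · have ha' : 0 < a^2 := by positivity
    nlinarith [mul_pos ha' (sub_pos.mpr hi), mul_nonneg (sq_nonneg b) (sub_pos.mpr hj).le]
  · have hb' : 0 < b^2 := by positivity
    nlinarith [mul_pos hb' (sub_pos.mpr hj), mul_nonneg (sq_nonneg a) (sub_pos.mpr hi).le]

/-- If `G` is a graph of order `n` and `1 < k ≤ n`, then `q_k(G) ≤ n - 2`. -/
theorem qk_le_n_sub_two (n k : ℕ) (hk1 : 1 < k) (hkn : k ≤ n)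
    (G : SimpleGraph (Fin n)) [DecidableRel G.Adj] :
    qEig G k ≤ (n : ℝ) - 2 := by
  have hn2 : 2 ≤ n := hk1.trans_le hkn
  have hcard : Fintype.card (Fin n) = n := Fintype.card_fin n
  have hk' : k - 1 < Fintype.card (Fin n) := by omega
  rw [qEig, kthEig, dif_pos (signlessLap_isHermitian_s14 G), dif_pos hk']
  set hM := signlessLap_isHermitian_s14 G with hMdef
  set f : Fin (Fintype.card (Fin n)) → ℝ := hM.eigenvalues ∘ (Fintype.equivFin (Fin n)).symm
    with hf
  set g := f ∘ Tuple.sort f with hg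
  have hmono : Monotone g := Tuple.monotone_sort f
  by_contra hcon
  push_neg at hcon
  -- indices N-2 and N-1
  have hN2 : Fintype.card (Fin n) - 2 < Fintype.card (Fin n) := by omega
  have hN1 : Fintype.card (Fin n) - 1 < Fintype.card (Fin n) := by omega
  set i2 : Fin (Fintype.card (Fin n)) := ⟨Fintype.card (Fin n) - 2, hN2⟩
  set i1 : Fin (Fintype.card (Fin n)) := ⟨Fintype.card (Fin n) - 1, hN1⟩
  have hrev : (Fin.rev ⟨k - 1, hk'⟩ : Fin (Fintype.card (Fin n))) ≤ i2 := by
    simp only [Fin.le_def, Fin.val_rev, i2]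
    omega
  have h2 : ((n:ℝ) - 2) < g i2 := lt_of_lt_of_le hcon (hmono hrev)
  have h1 : ((n:ℝ) - 2) < g i1 := lt_of_lt_of_le h2 (hmono (by simp only [Fin.le_def, i1, i2]; omega))
  have hne : Tuple.sort f i2 ≠ Tuple.sort f i1 := by
    intro h
    have := (Tuple.sort f).injective h
    simp only [i2, i1, Fin.mk.injEq] at this
    omega
  set p := (Fintype.equivFin (Fin n)).symm (Tuple.sort f i2)
  set q := (Fintype.equivFin (Fin n)).symm (Tuple.sort f i1)
  have hpq : p ≠ q := fun h => hne ((Fintype.equivFin (Fin n)).symm.injective h)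
  exact not_two_large_eigs G p q hpq h2 h1
end
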